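/- Let K be a field, K[X] = K[x_1,…,x_n], I ⊆ K[X] a zero-dimensional ideal, and d = dim_K K[X]/I. Then the quotient vector space I^{≤d} / I^{≤d−1} is isomorphic as a K-vector space to ⟨T^n_{=d}⟩_K; equivalently, dim_K I^{≤d} − dim_K I^{≤d−1} equals the number of monomials of total degree exactly d in n variables. -/

import Mathlib

open MvPolynomial

/-- Total degree of a monomial given by its exponent vector. -/
def mdeg {n : ℕ} (m : Fin n →₀ ℕ) : ℕ := m.sum fun _ k => k

/-- The set `T^n_{=e}` of monomials of total degree exactly `e`. -/
def degEQ (n e : ℕ) : Set (Fin n →₀ ℕ) := {m | mdeg m = e}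

/-- The `K`-vector subspace of `K[X]` spanned by a set of monomials. -/
noncomputable def monSpan (K : Type*) [Field K] {n : ℕ} (O : Set (Fin n →₀ ℕ)) :
    Submodule K (MvPolynomial (Fin n) K) :=
  Submodule.span K ((fun m => (monomial m (1 : K))) '' O)

/-- The degree filtration `I^{≤i} = {p ∈ I : deg p ≤ i}` of an ideal `I`,
as a `K`-subspace of `K[X]` (indexed by `i : ℤ`, so that `I^{≤-1} = 0`). -/
noncomputable def Ile {n : ℕ} {K : Type*} [Field K]
    (I : Ideal (MvPolynomial (Fin n) K)) (i : ℤ) : Submodule K (MvPolynomial (Fin n) K) :=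
  Submodule.restrictScalars K I ⊓ monSpan K {m : Fin n →₀ ℕ | (mdeg m : ℤ) ≤ i}

namespace IleAux
variable {n : ℕ} {K : Type*} [Field K]

lemma mdeg_add (a b : Fin n →₀ ℕ) : mdeg (a + b) = mdeg a + mdeg b :=
  Finsupp.sum_add_index' (fun _ => rfl) (fun _ _ _ => rfl)

lemma mdeg_single (i : Fin n) : mdeg (Finsupp.single i 1) = 1 := by
  simp [mdeg, Finsupp.sum_single_index]

lemma finite_le (N : ℕ) : {m : Fin n →₀ ℕ | mdeg m ≤ N}.Finite := by
  have h : ({g : Fin n → ℕ | ∀ i, g i ≤ N}).Finite := by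
    have := Set.Finite.pi (fun i : Fin n => Set.finite_Iic N)
    apply this.subset
    intro g hg
    simp only [Set.mem_pi, Set.mem_univ, Set.mem_Iic, forall_true_left]
    exact hg
  have hinj : Function.Injective (fun (m : Fin n →₀ ℕ) (i : Fin n) => m i) :=
    fun a b hab => Finsupp.ext (fun i => congrFun hab i)
  apply Set.Finite.subset ((h.preimage (hinj.injOn)))
  intro m hm
  simp only [Set.mem_setOf_eq] at hm
  simp only [Set.mem_preimage, Set.mem_setOf_eq]
  intro i
  rcases eq_or_ne (m i) 0 with h0 | h0
  · omega
  · have h1 : m i ≤ mdeg m := by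
      rw [mdeg, Finsupp.sum]
      exact Finset.single_le_sum (fun _ _ => Nat.zero_le _) (Finsupp.mem_support_iff.mpr h0)
    omega

lemma exists_decomp {m : Fin n →₀ ℕ} {e : ℕ} (h : mdeg m = e + 1) :
    ∃ (i : Fin n) (m' : Fin n →₀ ℕ), monomial m (1:K) = X i * monomial m' 1 ∧ mdeg m' = e := by
  have hne : m ≠ 0 := by rintro rfl; simp [mdeg] at h
  obtain ⟨i, hi⟩ := Finsupp.support_nonempty_iff.mpr hne
  have him : 1 ≤ m i := Nat.one_le_iff_ne_zero.mpr (Finsupp.mem_support_iff.mp hi)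
  have hm : Finsupp.single i 1 + (m - Finsupp.single i 1) = m := by
    ext j
    simp only [Finsupp.add_apply, Finsupp.tsub_apply, Finsupp.single_apply]
    rcases eq_or_ne i j with rfl | hij
    · rw [if_pos rfl]
      omega
    · simp [hij]
  refine ⟨i, m - Finsupp.single i 1, ?_, ?_⟩
  · have : (X i : MvPolynomial (Fin n) K) = monomial (Finsupp.single i 1) 1 := rfl
    rw [this, monomial_mul, one_mul, hm]
  · have h2 := mdeg_add (Finsupp.single i 1) (m - Finsupp.single i 1)
    rw [hm, h, mdeg_single] at h2
    omega


lemma monSpan_mono {O O' : Set (Fin n →₀ ℕ)} (h : O ⊆ O') : monSpan K O ≤ monSpan K O' :=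
  Submodule.span_mono (Set.image_mono h)

lemma li_monSpan (O : Set (Fin n →₀ ℕ)) :
    LinearIndependent K ((↑) : ((fun m => monomial m (1:K)) '' O) → MvPolynomial (Fin n) K) := by
  refine LinearIndepOn.id_image (v := fun m => monomial m (1:K)) ?_
  have h := (basisMonomials (Fin n) K).linearIndependent
  rw [coe_basisMonomials] at h
  exact h.comp _ Subtype.coe_injective

lemma fd_monSpan {O : Set (Fin n →₀ ℕ)} (hO : O.Finite) :
    FiniteDimensional K (monSpan K O) :=
  FiniteDimensional.span_of_finite K (hO.image _)

lemma finrank_monSpan {O : Set (Fin n →₀ ℕ)} (hO : O.Finite) :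
    Module.finrank K (monSpan K O) = O.ncard := by
  have hfin : ((fun m => monomial m (1:K)) '' O).Finite := hO.image _
  haveI := hfin.fintype
  rw [monSpan, finrank_span_set_eq_card (li_monSpan O), ← Set.ncard_eq_toFinset_card',
    Set.ncard_image_of_injective _ (monomial_left_injective (one_ne_zero))]

noncomputable def PN (K : Type*) [Field K] (n e : ℕ) : Submodule K (MvPolynomial (Fin n) K) :=
  monSpan K {m : Fin n →₀ ℕ | mdeg m ≤ e}

lemma monomial_mem_PN {m : Fin n →₀ ℕ} {e : ℕ} (h : mdeg m ≤ e) :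
    monomial m (1:K) ∈ PN K n e :=
  Submodule.subset_span ⟨m, h, rfl⟩

lemma mem_PN_of_totalDegree {p : MvPolynomial (Fin n) K} {e : ℕ} (hp : p.totalDegree ≤ e) :
    p ∈ PN K n e := by
  rw [p.as_sum]
  apply Submodule.sum_mem
  intro m hm
  have h1 : (monomial m) (coeff m p) = coeff m p • monomial m (1:K) := by
    rw [smul_monomial, smul_eq_mul, mul_one]
  rw [h1]
  exact Submodule.smul_mem _ _ (monomial_mem_PN (le_trans (le_totalDegree hm) hp))

lemma mul_X_mem_PN {e : ℕ} {q : MvPolynomial (Fin n) K} (hq : q ∈ PN K n e) (i : Fin n) :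
    X i * q ∈ PN K n (e+1) := by
  induction hq using Submodule.span_induction with
  | mem x hx =>
    obtain ⟨m, hm, rfl⟩ := hx
    have hX : (X i : MvPolynomial (Fin n) K) = monomial (Finsupp.single i 1) 1 := rfl
    rw [hX, monomial_mul, one_mul]
    apply monomial_mem_PN
    have : mdeg (Finsupp.single i 1 + m) = mdeg (Finsupp.single i 1) + mdeg m :=
      Finsupp.sum_add_index' (fun _ => rfl) (fun _ _ _ => rfl)
    rw [this]
    have h1 : mdeg (Finsupp.single i (1:ℕ)) = 1 := by simp [mdeg, Finsupp.sum_single_index]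
    simp only [Set.mem_setOf_eq] at hm
    omega
  | zero => rw [mul_zero]; exact Submodule.zero_mem _
  | add x y _ _ hx hy => rw [mul_add]; exact Submodule.add_mem _ hx hy
  | smul c x _ hx => rw [mul_smul_comm]; exact Submodule.smul_mem _ _ hx


noncomputable def qmap (I : Ideal (MvPolynomial (Fin n) K)) :
    MvPolynomial (Fin n) K →ₗ[K] (MvPolynomial (Fin n) K ⧸ I) :=
  (Ideal.Quotient.mkₐ K I).toLinearMap

noncomputable def WN (I : Ideal (MvPolynomial (Fin n) K)) (e : ℕ) :
    Submodule K (MvPolynomial (Fin n) K ⧸ I) :=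
  Submodule.map (qmap I) (PN K n e)


lemma PN_mono (I : Ideal (MvPolynomial (Fin n) K)) {e f : ℕ} (h : e ≤ f) : PN K n e ≤ PN K n f :=
  monSpan_mono (fun m hm => le_trans hm h)

lemma WN_mono (I : Ideal (MvPolynomial (Fin n) K)) {e f : ℕ} (h : e ≤ f) : WN I e ≤ WN I f :=
  Submodule.map_mono (PN_mono I h)

lemma WN_stab (I : Ideal (MvPolynomial (Fin n) K)) {e : ℕ} (h : WN I (e+1) ≤ WN I e) :
    ∀ f, WN I (e+f) ≤ WN I e := by
  intro f
  induction f with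
  | zero => exact le_rfl
  | succ f ih =>
    rw [WN, PN, monSpan, Submodule.map_span, Submodule.span_le]
    rintro _ ⟨_, ⟨m, hm, rfl⟩, rfl⟩
    simp only [Set.mem_setOf_eq] at hm
    rcases Nat.lt_or_ge (mdeg m) (e+f+1) with hlt | hge
    · exact ih (Submodule.mem_map_of_mem (monomial_mem_PN (by omega)))
    · have hme : mdeg m = (e+f) + 1 := by omega
      obtain ⟨i, m', hmm, hm'⟩ := exists_decomp (K := K) hme
      have h1 : qmap I (monomial m' 1) ∈ WN I e :=
        ih (Submodule.mem_map_of_mem (monomial_mem_PN (le_of_eq hm')))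
      obtain ⟨q, hq, hq2⟩ := h1
      have h2 : qmap I (monomial m (1:K)) = qmap I (X i * q) := by
        rw [hmm]
        show Ideal.Quotient.mkₐ K I _ = Ideal.Quotient.mkₐ K I _
        rw [map_mul, map_mul]
        congr 1
        exact hq2.symm
      rw [SetLike.mem_coe, h2]
      exact h (Submodule.mem_map_of_mem (mul_X_mem_PN hq i))

lemma WN_growth (I : Ideal (MvPolynomial (Fin n) K))
    [FiniteDimensional K (MvPolynomial (Fin n) K ⧸ I)]
    [Nontrivial (MvPolynomial (Fin n) K ⧸ I)] :
    ∀ e : ℕ, WN I e = ⊤ ∨ e + 1 ≤ Module.finrank K (WN I e) := by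
  intro e
  induction e with
  | zero =>
    right
    have h1 : ((1 : MvPolynomial (Fin n) K ⧸ I)) ∈ WN I 0 :=
      ⟨1, mem_PN_of_totalDegree (by simp), map_one (Ideal.Quotient.mkₐ K I)⟩
    have hone : (1 : MvPolynomial (Fin n) K ⧸ I) ≠ 0 := by
      intro h0
      rcases exists_pair_ne (MvPolynomial (Fin n) K ⧸ I) with ⟨a, b, hab⟩
      apply hab
      calc a = a * 1 := (mul_one a).symm
      _ = a * 0 := by rw [h0]
      _ = 0 := mul_zero a
      _ = b * 0 := (mul_zero b).symm
      _ = b * 1 := by rw [h0]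
      _ = b := mul_one b
    have hbot : WN I 0 ≠ ⊥ := by
      intro hb
      rw [hb, Submodule.mem_bot] at h1
      exact hone h1
    have h2 : Module.finrank K (WN I 0) ≠ 0 := fun hz => hbot (Submodule.finrank_eq_zero.mp hz)
    omega
  | succ e ih =>
    rcases ih with h | h
    · left
      rw [eq_top_iff, ← h]
      exact WN_mono I (Nat.le_succ e)
    · by_cases htop : WN I (e+1) = ⊤
      · left; exact htop
      · right
        have hne : WN I e ≠ WN I (e+1) := by
          intro heq
          apply htop
          rw [eq_top_iff]
          rintro x -
          obtain ⟨p, rfl⟩ : ∃ p, qmap I p = x := Ideal.Quotient.mk_surjective x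
          have hst := WN_stab I (le_of_eq heq.symm) p.totalDegree
          have : qmap I p ∈ WN I (e + p.totalDegree) :=
            Submodule.mem_map_of_mem (mem_PN_of_totalDegree (by omega))
          exact WN_mono I (by omega : e ≤ e + 1) (hst this)
        have hlt : WN I e < WN I (e+1) := lt_of_le_of_ne (WN_mono I (Nat.le_succ e)) hne
        have := Submodule.finrank_lt_finrank_of_lt hlt
        omega

lemma WN_eq_top (I : Ideal (MvPolynomial (Fin n) K))
    [FiniteDimensional K (MvPolynomial (Fin n) K ⧸ I)]
    (hd : 1 ≤ Module.finrank K (MvPolynomial (Fin n) K ⧸ I)) :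
    WN I (Module.finrank K (MvPolynomial (Fin n) K ⧸ I) - 1) = ⊤ := by
  haveI : Nontrivial (MvPolynomial (Fin n) K ⧸ I) :=
    Module.nontrivial_of_finrank_pos (R := K) (by omega)
  rcases WN_growth I (Module.finrank K (MvPolynomial (Fin n) K ⧸ I) - 1) with h | h
  · exact h
  · exact Submodule.eq_top_of_finrank_eq (le_antisymm (Submodule.finrank_le _) (by omega))


lemma finite_leZ (i : ℤ) : {m : Fin n →₀ ℕ | (mdeg m : ℤ) ≤ i}.Finite := by
  apply (finite_le i.toNat).subset
  intro m hm
  simp only [Set.mem_setOf_eq] at hm ⊢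
  omega

lemma finrank_PZ (I : Ideal (MvPolynomial (Fin n) K))
    [FiniteDimensional K (MvPolynomial (Fin n) K ⧸ I)] {i : ℤ}
    (h : Submodule.map (qmap I) (monSpan K {m : Fin n →₀ ℕ | (mdeg m : ℤ) ≤ i}) = ⊤) :
    Module.finrank K (monSpan K {m : Fin n →₀ ℕ | (mdeg m : ℤ) ≤ i}) =
      Module.finrank K (MvPolynomial (Fin n) K ⧸ I) + Module.finrank K (Ile I i) := by
  set P := monSpan K {m : Fin n →₀ ℕ | (mdeg m : ℤ) ≤ i} with hP
  haveI : FiniteDimensional K P := fd_monSpan (finite_leZ i)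
  set ψ : P →ₗ[K] (MvPolynomial (Fin n) K ⧸ I) := (qmap I).comp P.subtype with hψ
  have hrange : LinearMap.range ψ = ⊤ := by
    rw [hψ, LinearMap.range_comp, Submodule.range_subtype]
    exact h
  have hker : LinearMap.ker ψ = Submodule.comap P.subtype (Ile I i) := by
    ext x
    simp only [hψ, LinearMap.mem_ker, LinearMap.comp_apply, Submodule.coe_subtype,
      Submodule.mem_comap, Ile, Submodule.mem_inf, Submodule.restrictScalars_mem, qmap,
      AlgHom.toLinearMap_apply, Ideal.Quotient.mkₐ_eq_mk, Ideal.Quotient.eq_zero_iff_mem]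
    exact ⟨fun hx => ⟨hx, x.2⟩, fun hx => hx.1⟩
  have hrn := LinearMap.finrank_range_add_finrank_ker ψ
  rw [hrange, hker] at hrn
  rw [finrank_top] at hrn
  have he : Module.finrank K (Submodule.comap P.subtype (Ile I i)) = Module.finrank K (Ile I i) :=
    LinearEquiv.finrank_eq (Submodule.comapSubtypeEquivOfLe inf_le_right)
  omega


end IleAux

open IleAux in
/-- for a zero-dimensional ideal `I` with `d = dim_K K[X]/I`,
the quotient `I^{≤d}/I^{≤d-1}` is `K`-linearly isomorphic to `⟨T^n_{=d}⟩_K`;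
equivalently, `dim I^{≤d} - dim I^{≤d-1}` is the number of monomials of total
degree exactly `d`. -/
theorem Ile_quotient_iso_degEQ {n : ℕ} {K : Type*} [Field K]
    (I : Ideal (MvPolynomial (Fin n) K))
    (hI : FiniteDimensional K (MvPolynomial (Fin n) K ⧸ I))
    (d : ℕ) (hd : d = Module.finrank K (MvPolynomial (Fin n) K ⧸ I)) :
    Nonempty ((↥(Ile I d) ⧸
        Submodule.comap (Ile I d).subtype (Ile I ((d : ℤ) - 1))) ≃ₗ[K]
      ↥(monSpan K (degEQ n d))) ∧
    Module.finrank K ↥(Ile I d) - Module.finrank K ↥(Ile I ((d : ℤ) - 1)) =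
      (degEQ n d).ncard := by
  -- the two image-of-filtration-is-everything facts
  have htop1 : Submodule.map (qmap I) (monSpan K {m : Fin n →₀ ℕ | (mdeg m : ℤ) ≤ (d : ℤ) - 1})
      = ⊤ := by
    rcases Nat.eq_zero_or_pos d with hd0 | hd1
    · have hsub : Subsingleton (MvPolynomial (Fin n) K ⧸ I) := by
        rw [← Module.finrank_zero_iff (R := K)]
        omega
      exact Subsingleton.elim _ _
    · have hset : {m : Fin n →₀ ℕ | (mdeg m : ℤ) ≤ (d : ℤ) - 1}
          = {m : Fin n →₀ ℕ | mdeg m ≤ d - 1} := by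
        ext m
        simp only [Set.mem_setOf_eq]
        omega
      rw [hset]
      have := WN_eq_top I (by omega)
      rw [WN, PN, ← hd] at this
      exact this
  have htop2 : Submodule.map (qmap I) (monSpan K {m : Fin n →₀ ℕ | (mdeg m : ℤ) ≤ (d : ℤ)})
      = ⊤ := by
    rw [eq_top_iff, ← htop1]
    exact Submodule.map_mono (monSpan_mono (fun m hm => by
      simp only [Set.mem_setOf_eq] at hm ⊢; omega))
  -- finrank identities
  have e1 := finrank_PZ I htop2
  have e2 := finrank_PZ I htop1
  rw [← hd] at e1 e2
  -- counting monomials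
  have hfin2 : ({m : Fin n →₀ ℕ | (mdeg m : ℤ) ≤ (d : ℤ) - 1}).Finite := finite_leZ _
  have hfinE : (degEQ n d).Finite := by
    apply (finite_le d).subset
    intro m hm
    simp only [degEQ, Set.mem_setOf_eq] at hm ⊢
    omega
  have hsets : {m : Fin n →₀ ℕ | (mdeg m : ℤ) ≤ (d : ℤ)}
      = {m : Fin n →₀ ℕ | (mdeg m : ℤ) ≤ (d : ℤ) - 1} ∪ degEQ n d := by
    ext m
    simp only [Set.mem_setOf_eq, Set.mem_union, degEQ]
    omega
  have hdisj : Disjoint {m : Fin n →₀ ℕ | (mdeg m : ℤ) ≤ (d : ℤ) - 1} (degEQ n d) := by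
    rw [Set.disjoint_left]
    intro m h1 h2
    simp only [Set.mem_setOf_eq, degEQ] at h1 h2
    omega
  have hcard : ({m : Fin n →₀ ℕ | (mdeg m : ℤ) ≤ (d : ℤ)}).ncard
      = ({m : Fin n →₀ ℕ | (mdeg m : ℤ) ≤ (d : ℤ) - 1}).ncard + (degEQ n d).ncard := by
    rw [hsets, Set.ncard_union_eq hdisj hfin2 hfinE]
  rw [finrank_monSpan (finite_leZ _)] at e1
  rw [finrank_monSpan (finite_leZ _)] at e2
  -- main numeric identity
  have hmain : Module.finrank K (Ile I (d : ℤ))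
      = Module.finrank K (Ile I ((d : ℤ) - 1)) + (degEQ n d).ncard := by omega
  constructor
  · -- the isomorphism
    have hle : Ile I ((d : ℤ) - 1) ≤ Ile I (d : ℤ) :=
      inf_le_inf_left _ (monSpan_mono (fun m hm => by
        simp only [Set.mem_setOf_eq] at hm ⊢; omega))
    haveI : FiniteDimensional K (Ile I (d : ℤ)) := by
      haveI := fd_monSpan (K := K) (finite_leZ (n := n) (d : ℤ))
      exact Submodule.finiteDimensional_of_le (inf_le_right :
        Ile I (d:ℤ) ≤ monSpan K {m : Fin n →₀ ℕ | (mdeg m : ℤ) ≤ (d : ℤ)})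
    haveI : FiniteDimensional K (monSpan K (degEQ n d)) := fd_monSpan hfinE
    have hq := Submodule.finrank_quotient_add_finrank
      (Submodule.comap (Ile I (d : ℤ)).subtype (Ile I ((d : ℤ) - 1)))
    have hc : Module.finrank K
        (Submodule.comap (Ile I (d : ℤ)).subtype (Ile I ((d : ℤ) - 1)))
        = Module.finrank K (Ile I ((d : ℤ) - 1)) :=
      LinearEquiv.finrank_eq (Submodule.comapSubtypeEquivOfLe hle)
    refine ⟨LinearEquiv.ofFinrankEq _ _ ?_⟩
    rw [finrank_monSpan hfinE]
    omega
  · omega
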